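/- Fix v₀ ≤ 0 and the prior μ, and let u₀ < u₀' < 0 with (1 − v₀)² + u₀ > (E_μ[θ] − v₀)² (so the valuable condition also holds for u₀'). Write η(θ) = √((θ − v₀)² + u₀) + v₀ and η'(θ) = √((θ − v₀)² + u₀') + v₀; let (ā, θ̄) and (ā', θ̄') be the corresponding threshold pairs, where ā is the unique solution of ∫_{θ̄}¹ (η(θ) − ā) dμ(θ) + ā − E_μ[θ] = 0 with η(θ̄) = ā, and similarly for (ā', θ̄') with η'; and let p̃*(θ) = 0 for θ < θ̄ and p̃*(θ) = (η(θ) − ā)/(η(θ) − v₀) for θ ≥ θ̄, and analogously p̃*' from (η', ā', θ̄'). Then: (a) η(θ) < η'(θ) for every θ at which both are defined; (b) ā' < ā and θ̄' < θ̄; (c) p̃*'(θ) ≥ p̃*(θ) for every θ ∈ [0,1]. -/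

import Mathlib

open MeasureTheory Set

private lemma sqrt_gap_aux {A B C : ℝ} (hA : 0 ≤ A) (hAB : A < B) (hBC : B ≤ C) :
    (B - A) / (2 * Real.sqrt C) ≤ Real.sqrt B - Real.sqrt A := by
  have hB : 0 < B := lt_of_le_of_lt hA hAB
  have hC : 0 < C := lt_of_lt_of_le hB hBC
  have hsB := Real.sq_sqrt hB.le
  have hsA := Real.sq_sqrt hA
  have h2 : Real.sqrt B ≤ Real.sqrt C := Real.sqrt_le_sqrt hBC
  have h3 : Real.sqrt A ≤ Real.sqrt B := Real.sqrt_le_sqrt hAB.le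
  have h1 : Real.sqrt A ≤ Real.sqrt C := h3.trans h2
  have hCpos : 0 < Real.sqrt C := Real.sqrt_pos.2 hC
  rw [div_le_iff₀ (by positivity)]
  nlinarith [Real.sqrt_nonneg A, Real.sqrt_nonneg B,
    mul_le_mul_of_nonneg_left (by linarith : Real.sqrt B + Real.sqrt A ≤ 2 * Real.sqrt C)
      (by linarith : (0:ℝ) ≤ Real.sqrt B - Real.sqrt A)]

private lemma split_max_integral (μ : Measure ℝ) [IsProbabilityMeasure μ]
    (f : ℝ → ℝ) (hf : Continuous f) (a t : ℝ) (ht : t ∈ Icc (0:ℝ) 1)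
    (hle : ∀ θ ∈ Icc (0:ℝ) t, f θ ≤ a) (hge : ∀ θ ∈ Icc t (1:ℝ), a ≤ f θ) :
    ∫ θ in Icc (0:ℝ) 1, max (f θ - a) 0 ∂μ = ∫ θ in Icc t 1, (f θ - a) ∂μ := by
  have hcont : Continuous fun θ => max (f θ - a) 0 :=
    (hf.sub continuous_const).max continuous_const
  have hint : IntegrableOn (fun θ => max (f θ - a) 0) (Icc (0:ℝ) 1) μ := hcont.integrableOn_Icc
  have hunion : Ico (0:ℝ) t ∪ Icc t 1 = Icc 0 1 := Ico_union_Icc_eq_Icc ht.1 ht.2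
  have hdisj : Disjoint (Ico (0:ℝ) t) (Icc t 1) := by
    rw [Set.disjoint_left]
    rintro x ⟨_, h2⟩ ⟨h3, _⟩
    exact absurd h3 (not_le.2 h2)
  have h1 : ∫ θ in Ico (0:ℝ) t, max (f θ - a) 0 ∂μ = 0 := by
    rw [setIntegral_congr_fun measurableSet_Ico
      (fun θ hθ => max_eq_right (by have := hle θ ⟨hθ.1, le_of_lt hθ.2⟩; linarith))]
    simp
  have h2 : ∫ θ in Icc t 1, max (f θ - a) 0 ∂μ = ∫ θ in Icc t 1, (f θ - a) ∂μ :=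
    setIntegral_congr_fun measurableSet_Icc
      (fun θ hθ => max_eq_left (by have := hge θ hθ; linarith))
  calc ∫ θ in Icc (0:ℝ) 1, max (f θ - a) 0 ∂μ
      = ∫ θ in Ico (0:ℝ) t ∪ Icc t 1, max (f θ - a) 0 ∂μ := by rw [hunion]
    _ = (∫ θ in Ico (0:ℝ) t, max (f θ - a) 0 ∂μ) + ∫ θ in Icc t 1, max (f θ - a) 0 ∂μ := by
        refine setIntegral_union hdisj measurableSet_Icc ?_ ?_
        · exact hint.mono_set (by rw [← hunion]; exact subset_union_left)
        · exact hint.mono_set (by rw [← hunion]; exact subset_union_right)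
    _ = ∫ θ in Icc t 1, (f θ - a) ∂μ := by rw [h1, h2, zero_add]

set_option maxHeartbeats 2000000 in
/-- **Comparative statics in the principal's status quo payoff `u₀`.** Fix `v₀ ≤ 0` and the
prior `μ`, and let `u₀ < u₀' < 0` with the valuable condition holding for `u₀`. Then (a) the
separating action increases pointwise: `η(θ) < η'(θ)` wherever both are defined; (b) both
the pooling action and the state threshold decrease: `ā' < ā` and `θ̄' < θ̄`; and (c) the
veto probability weakly increases: `p̃*'(θ) ≥ p̃*(θ)` for all `θ ∈ [0,1]`. -/
theorem comparative_statics_u₀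
    (μ : Measure ℝ) [IsProbabilityMeasure μ]
    (hsupp : μ (Icc (0 : ℝ) 1) = 1)
    (hfull : ∀ a b : ℝ, 0 ≤ a → a < b → b ≤ 1 → 0 < μ (Ioo a b))
    (v₀ : ℝ) (hv₀ : v₀ ≤ 0)
    (u₀ u₀' : ℝ) (huu : u₀ < u₀') (hu₀' : u₀' < 0)
    (Eμ : ℝ) (hEμ : Eμ = ∫ θ, θ ∂μ)
    (hval : (Eμ - v₀) ^ 2 < (1 - v₀) ^ 2 + u₀)
    (η η' : ℝ → ℝ)
    (hη : ∀ θ, η θ = Real.sqrt ((θ - v₀) ^ 2 + u₀) + v₀)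
    (hη' : ∀ θ, η' θ = Real.sqrt ((θ - v₀) ^ 2 + u₀') + v₀)
    (s s' : ℝ) (hs : s = max 0 (Real.sqrt (-u₀) + v₀)) (hs' : s' = max 0 (Real.sqrt (-u₀') + v₀))
    (abar θbar abar' θbar' : ℝ)
    (hθbar : θbar ∈ Icc s 1) (hηθbar : η θbar = abar)
    (hFOC : (∫ θ in Icc θbar 1, (η θ - abar) ∂μ) + abar - Eμ = 0)
    (hθbar' : θbar' ∈ Icc s' 1) (hηθbar' : η' θbar' = abar')
    (hFOC' : (∫ θ in Icc θbar' 1, (η' θ - abar') ∂μ) + abar' - Eμ = 0)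
    (pf pf' : ℝ → ℝ)
    (hpf : ∀ θ, pf θ = if θ < θbar then 0 else (η θ - abar) / (η θ - v₀))
    (hpf' : ∀ θ, pf' θ = if θ < θbar' then 0 else (η' θ - abar') / (η' θ - v₀)) :
    (∀ θ ∈ Icc (0 : ℝ) 1, 0 ≤ (θ - v₀) ^ 2 + u₀ → 0 ≤ (θ - v₀) ^ 2 + u₀' → η θ < η' θ) ∧
      abar' < abar ∧ θbar' < θbar ∧
      ∀ θ ∈ Icc (0 : ℝ) 1, pf θ ≤ pf' θ := by
  -- basic positions
  have hθb0 : (0:ℝ) ≤ θbar := le_trans (hs ▸ le_max_left _ _) hθbar.1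
  have hθb1 : θbar ≤ 1 := hθbar.2
  have hθb0' : (0:ℝ) ≤ θbar' := le_trans (hs' ▸ le_max_left _ _) hθbar'.1
  have hθb1' : θbar' ≤ 1 := hθbar'.2
  -- monotonicity of η, η'
  have hmono : ∀ x y : ℝ, 0 ≤ x → x ≤ y → η x ≤ η y := by
    intro x y hx hxy
    rw [hη, hη]
    have h1 : (x - v₀) ^ 2 ≤ (y - v₀) ^ 2 := by nlinarith
    exact add_le_add_left (Real.sqrt_le_sqrt (by linarith)) _
  have hmono' : ∀ x y : ℝ, 0 ≤ x → x ≤ y → η' x ≤ η' y := by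
    intro x y hx hxy
    rw [hη', hη']
    have h1 : (x - v₀) ^ 2 ≤ (y - v₀) ^ 2 := by nlinarith
    exact add_le_add_left (Real.sqrt_le_sqrt (by linarith)) _
  -- η ≤ η' pointwise
  have hle : ∀ θ : ℝ, η θ ≤ η' θ := fun θ => by
    rw [hη, hη']
    exact add_le_add_left (Real.sqrt_le_sqrt (by linarith)) _
  -- nonnegativity of the sqrt argument at θbar
  have hθs : 0 ≤ (θbar - v₀) ^ 2 + u₀ := by
    have h1 : Real.sqrt (-u₀) + v₀ ≤ θbar := le_trans (hs ▸ le_max_right _ _) hθbar.1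
    have h2 := Real.sq_sqrt (by linarith : (0:ℝ) ≤ -u₀)
    have h3 := Real.sqrt_nonneg (-u₀)
    nlinarith
  -- part (a)
  have parta : ∀ θ ∈ Icc (0 : ℝ) 1, 0 ≤ (θ - v₀) ^ 2 + u₀ → 0 ≤ (θ - v₀) ^ 2 + u₀' →
      η θ < η' θ := by
    intro θ _ h0 _
    rw [hη, hη']
    exact add_lt_add_left (Real.sqrt_lt_sqrt h0 (by linarith)) _
  -- Eμ bounds
  have hae : ∀ᵐ θ ∂μ, θ ∈ Icc (0:ℝ) 1 := by
    rw [ae_iff]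
    have : {θ : ℝ | ¬θ ∈ Icc (0:ℝ) 1} = (Icc (0:ℝ) 1)ᶜ := rfl
    rw [this, measure_compl measurableSet_Icc (measure_ne_top μ _), hsupp, measure_univ]
    simp
  have hEμ0 : 0 ≤ Eμ := by
    rw [hEμ]
    exact integral_nonneg_of_ae (hae.mono fun θ h => h.1)
  -- abar ≤ Eμ, abar' ≤ Eμ
  have haE : abar ≤ Eμ := by
    have h1 : 0 ≤ ∫ θ in Icc θbar 1, (η θ - abar) ∂μ :=
      setIntegral_nonneg measurableSet_Icc fun θ hθ => by
        have := hmono θbar θ hθb0 hθ.1; linarith [hηθbar ▸ this]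
    linarith
  have haE' : abar' ≤ Eμ := by
    have h1 : 0 ≤ ∫ θ in Icc θbar' 1, (η' θ - abar') ∂μ :=
      setIntegral_nonneg measurableSet_Icc fun θ hθ => by
        have := hmono' θbar' θ hθb0' hθ.1; linarith [hηθbar' ▸ this]
    linarith
  -- Eμ < η 1
  have hElt : Eμ < η 1 := by
    rw [hη]
    have : Eμ - v₀ < Real.sqrt ((1 - v₀) ^ 2 + u₀) :=
      (Real.lt_sqrt (by linarith)).2 hval
    linarith
  -- θbar < 1
  have hθblt : θbar < 1 := by
    rcases lt_or_eq_of_le hθb1 with h | h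
    · exact h
    · exfalso; rw [← h] at hElt; linarith [hηθbar ▸ hElt]
  -- continuity
  have hcη : Continuous η := by
    have : Continuous fun θ : ℝ => Real.sqrt ((θ - v₀) ^ 2 + u₀) + v₀ :=
      (Real.continuous_sqrt.comp
        (((continuous_id.sub continuous_const).pow 2).add continuous_const)).add
        continuous_const
    exact (funext hη : η = _) ▸ this
  have hcη' : Continuous η' := by
    have : Continuous fun θ : ℝ => Real.sqrt ((θ - v₀) ^ 2 + u₀') + v₀ :=
      (Real.continuous_sqrt.comp
        (((continuous_id.sub continuous_const).pow 2).add continuous_const)).add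
        continuous_const
    exact (funext hη' : η' = _) ▸ this
  -- integral reformulations
  have hsplit : ∫ θ in Icc (0:ℝ) 1, max (η θ - abar) 0 ∂μ
      = ∫ θ in Icc θbar 1, (η θ - abar) ∂μ := by
    refine split_max_integral μ η hcη abar θbar ⟨hθb0, hθb1⟩ ?_ ?_
    · intro θ hθ; have := hmono θ θbar hθ.1 hθ.2; linarith [hηθbar ▸ this]
    · intro θ hθ; have := hmono θbar θ hθb0 hθ.1; linarith [hηθbar ▸ this]
  have hsplit' : ∫ θ in Icc (0:ℝ) 1, max (η' θ - abar') 0 ∂μ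
      = ∫ θ in Icc θbar' 1, (η' θ - abar') ∂μ := by
    refine split_max_integral μ η' hcη' abar' θbar' ⟨hθb0', hθb1'⟩ ?_ ?_
    · intro θ hθ; have := hmono' θ θbar' hθ.1 hθ.2; linarith [hηθbar' ▸ this]
    · intro θ hθ; have := hmono' θbar' θ hθb0' hθ.1; linarith [hηθbar' ▸ this]
  have hΦ : (∫ θ in Icc (0:ℝ) 1, max (η θ - abar) 0 ∂μ) + abar - Eμ = 0 := by
    rw [hsplit]; exact hFOC
  have hΦ' : (∫ θ in Icc (0:ℝ) 1, max (η' θ - abar') 0 ∂μ) + abar' - Eμ = 0 := by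
    rw [hsplit']; exact hFOC'
  -- integrability facts
  have hi1 : IntegrableOn (fun θ => max (η θ - abar) 0) (Icc (0:ℝ) 1) μ :=
    ((hcη.sub continuous_const).max continuous_const).integrableOn_Icc
  have hi2 : IntegrableOn (fun θ => max (η' θ - abar) 0) (Icc (0:ℝ) 1) μ :=
    ((hcη'.sub continuous_const).max continuous_const).integrableOn_Icc
  have hi3 : IntegrableOn (fun θ => max (η' θ - abar') 0) (Icc (0:ℝ) 1) μ :=
    ((hcη'.sub continuous_const).max continuous_const).integrableOn_Icc
  have hμ01 : (μ (Icc (0:ℝ) 1)).toReal = 1 := by rw [hsupp]; simp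
  -- the gap constant
  have hCpos : 0 < (1 - v₀) ^ 2 + u₀' := by nlinarith [sq_nonneg (Eμ - v₀)]
  set ε : ℝ := (u₀' - u₀) / (2 * Real.sqrt ((1 - v₀) ^ 2 + u₀')) with hεdef
  have hεpos : 0 < ε := by
    apply div_pos (by linarith)
    have := Real.sqrt_pos.2 hCpos
    linarith
  -- F abar > 0 where F a = ∫ max(η' - a) + a - Eμ
  have hFa : (0:ℝ) < (∫ θ in Icc (0:ℝ) 1, max (η' θ - abar) 0 ∂μ) + abar - Eμ := by
    have hdiff : (∫ θ in Icc (0:ℝ) 1, max (η' θ - abar) 0 ∂μ) + abar - Eμ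
        = ∫ θ in Icc (0:ℝ) 1, (max (η' θ - abar) 0 - max (η θ - abar) 0) ∂μ := by
      rw [integral_sub hi2 hi1]; linarith
    rw [hdiff]
    have hlower : ∀ θ ∈ Icc θbar 1, ε ≤ max (η' θ - abar) 0 - max (η θ - abar) 0 := by
      intro θ hθ
      have hη_ge : abar ≤ η θ := by
        have := hmono θbar θ hθb0 hθ.1; linarith [hηθbar ▸ this]
      have hη'_ge : abar ≤ η' θ := le_trans hη_ge (hle θ)
      rw [max_eq_left (by linarith), max_eq_left (by linarith)]
      have hA0 : 0 ≤ (θ - v₀) ^ 2 + u₀ := by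
        have h1 : (θbar - v₀) ^ 2 ≤ (θ - v₀) ^ 2 := by nlinarith [hθ.1]
        linarith
      have hBC : (θ - v₀) ^ 2 + u₀' ≤ (1 - v₀) ^ 2 + u₀' := by
        have h1 : (θ - v₀) ^ 2 ≤ (1 - v₀) ^ 2 := by
          have h0θ : (0:ℝ) ≤ θ := le_trans hθb0 hθ.1
          nlinarith [hθ.2]
        linarith
      have := sqrt_gap_aux hA0 (by linarith : (θ - v₀) ^ 2 + u₀ < (θ - v₀) ^ 2 + u₀') hBC
      rw [hη, hη']
      have heq : (θ - v₀) ^ 2 + u₀' - ((θ - v₀) ^ 2 + u₀) = u₀' - u₀ := by ring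
      rw [heq] at this
      rw [hεdef]; linarith
    have hi21 : IntegrableOn (fun θ => max (η' θ - abar) 0 - max (η θ - abar) 0)
        (Icc (0:ℝ) 1) μ := hi2.sub hi1
    have hsub : ∫ θ in Icc θbar 1, (max (η' θ - abar) 0 - max (η θ - abar) 0) ∂μ
        ≤ ∫ θ in Icc (0:ℝ) 1, (max (η' θ - abar) 0 - max (η θ - abar) 0) ∂μ := by
      apply setIntegral_mono_set hi21
      · filter_upwards with θ
        have h1 : max (η θ - abar) 0 ≤ max (η' θ - abar) 0 :=
          max_le_max (by linarith [hle θ]) le_rfl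
        simpa using sub_nonneg.2 h1
      · filter_upwards with θ hθ
        exact ⟨le_trans hθb0 hθ.1, hθ.2⟩
    have hεint : ∫ θ in Icc θbar 1, (fun _ : ℝ => ε) θ ∂μ
        ≤ ∫ θ in Icc θbar 1, (max (η' θ - abar) 0 - max (η θ - abar) 0) ∂μ := by
      apply setIntegral_mono_on (integrableOn_const (measure_ne_top μ _))
        (hi21.mono_set (fun θ hθ => ⟨le_trans hθb0 hθ.1, hθ.2⟩))
        measurableSet_Icc
      exact hlower
    have hconst : ∫ _θ in Icc θbar 1, (fun _ : ℝ => ε) _θ ∂μ = (μ (Icc θbar 1)).toReal * ε := by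
      rw [setIntegral_const]; simp [smul_eq_mul, measureReal_def]
    have hμpos : 0 < (μ (Icc θbar 1)).toReal := by
      apply ENNReal.toReal_pos
      · refine ne_of_gt (lt_of_lt_of_le (hfull θbar 1 hθb0 hθblt le_rfl) ?_)
        exact measure_mono Ioo_subset_Icc_self
      · exact measure_ne_top μ _
    calc (0:ℝ) < (μ (Icc θbar 1)).toReal * ε := mul_pos hμpos hεpos
      _ = ∫ _θ in Icc θbar 1, (fun _ : ℝ => ε) _θ ∂μ := hconst.symm
      _ ≤ ∫ θ in Icc θbar 1, (max (η' θ - abar) 0 - max (η θ - abar) 0) ∂μ := hεint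
      _ ≤ _ := hsub
  -- abar' < abar
  have habar : abar' < abar := by
    by_contra hcon
    push_neg at hcon  -- abar ≤ abar'
    -- F is "Lipschitz-monotone": F abar ≤ F abar' = 0
    have hptwise : ∀ θ ∈ Icc (0:ℝ) 1,
        max (η' θ - abar) 0 ≤ max (η' θ - abar') 0 + (abar' - abar) := by
      intro θ _
      apply max_le
      · have : max (η' θ - abar') 0 ≥ η' θ - abar' := le_max_left _ _
        linarith
      · have : max (η' θ - abar') 0 ≥ 0 := le_max_right _ _
        linarith
    have hmon : ∫ θ in Icc (0:ℝ) 1, max (η' θ - abar) 0 ∂μ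
        ≤ ∫ θ in Icc (0:ℝ) 1, (max (η' θ - abar') 0 + (abar' - abar)) ∂μ := by
      apply setIntegral_mono_on hi2
        (hi3.add (integrableOn_const (measure_ne_top μ _)))
        measurableSet_Icc hptwise
    rw [integral_add hi3 (integrableOn_const (measure_ne_top μ _)),
      setIntegral_const, measureReal_def, hsupp] at hmon
    simp only [ENNReal.toReal_one, one_smul, smul_eq_mul] at hmon
    linarith
  -- θbar' < θbar
  have hθθ : θbar' < θbar := by
    by_contra hcon
    push_neg at hcon  -- θbar ≤ θbar'
    have h1 : η' θbar ≤ η' θbar' := hmono' θbar θbar' hθb0 hcon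
    have h2 : η θbar < η' θbar :=
      parta θbar ⟨hθb0, hθb1⟩ hθs (by linarith)
    rw [hηθbar] at h2
    rw [hηθbar'] at h1
    linarith
  refine ⟨parta, habar, hθθ, ?_⟩
  -- part (c)
  intro θ hθ
  rw [hpf, hpf']
  by_cases hc1 : θ < θbar'
  · rw [if_pos hc1, if_pos (lt_trans hc1 hθθ)]
  · rw [if_neg hc1]
    push_neg at hc1
    have hnum' : 0 ≤ η' θ - abar' := by
      have := hmono' θbar' θ hθb0' hc1; linarith [hηθbar' ▸ this]
    have hden' : 0 ≤ η' θ - v₀ := by rw [hη']; simp [Real.sqrt_nonneg]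
    by_cases hc2 : θ < θbar
    · rw [if_pos hc2]
      exact div_nonneg hnum' hden'
    · rw [if_neg hc2]
      push_neg at hc2
      have hnum : 0 ≤ η θ - abar := by
        have := hmono θbar θ hθb0 hc2; linarith [hηθbar ▸ this]
      have hden : 0 ≤ η θ - v₀ := by rw [hη]; simp [Real.sqrt_nonneg]
      have hdd : η θ - v₀ ≤ η' θ - v₀ := by linarith [hle θ]
      have hav : v₀ ≤ abar := by
        rw [← hηθbar, hη]; simp [Real.sqrt_nonneg]
      have hav' : v₀ ≤ abar' := by
        rw [← hηθbar', hη']; simp [Real.sqrt_nonneg]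
      rcases eq_or_lt_of_le hden with hd0 | hdpos
      · rw [← hd0, div_zero]
        exact div_nonneg hnum' hden'
      · have hdpos' : 0 < η' θ - v₀ := lt_of_lt_of_le hdpos hdd
        rw [div_le_div_iff₀ hdpos hdpos']
        nlinarith [mul_le_mul_of_nonneg_left hdd (by linarith : (0:ℝ) ≤ abar - v₀)]
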